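/- Assume the Moran structure satisfies condition (H). Then there exists a constant C > 0 such that for all geodesic rays ξ = (u_n)_{n≥0} and η = (v_n)_{n≥0} of the induced augmented tree with Φ(ξ) ≠ Φ(η), one has C^{-1}·|Φ(ξ) − Φ(η)| ≤ r^{t(ξ,η)} ≤ C·|Φ(ξ) − Φ(η)|, where t(ξ,η) = liminf_n ⟨u_n, v_n⟩. -/

import Mathlib

open Metric Set Filter

attribute [local instance] Classical.propDecidable

noncomputable section

namespace MoranPaper

/-- Points of `ℝ^d`. -/
abbrev Pt (d : ℕ) := EuclideanSpace ℝ (Fin d)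

/-- `w` is an admissible word: the letter at (0-indexed) position `j`
(corresponding to step `j+1`) lies in `[1, n j]`, where `n j` encodes `n_{j+1}`. -/
def IsWord (n : ℕ → ℕ) (w : List ℕ) : Prop :=
  ∀ j (h : j < w.length), 1 ≤ w.get ⟨j, h⟩ ∧ w.get ⟨j, h⟩ ≤ n j

/-- The set `D_k` of words of length `k`. -/
def WordsLen (n : ℕ → ℕ) (k : ℕ) : Set (List ℕ) := {w | IsWord n w ∧ w.length = k}

/-- A Moran structure on the data `(J, (n_k), (r_k))`:  a family of sets `J_w`
indexed by words, with `J_∅ = J`, each `J_w` a similar copy of `J`, children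
contained in the parent with pairwise disjoint interiors, and prescribed
diameter ratios. -/
structure MoranStructure (d : ℕ) (J : Set (Pt d)) (n : ℕ → ℕ) (r : ℕ → ℝ) where
  Jset : List ℕ → Set (Pt d)
  root_eq : Jset [] = J
  similar : ∀ w, IsWord n w → ∃ (S : Pt d → Pt d) (c : ℝ), 0 < c ∧
      (∀ x y, dist (S x) (S y) = c * dist x y) ∧ Jset w = S '' J
  nested : ∀ w, IsWord n w → ∀ a, 1 ≤ a → a ≤ n w.length →
      Jset (w ++ [a]) ⊆ Jset w
  disjoint_int : ∀ w, IsWord n w → ∀ a b, 1 ≤ a → a ≤ n w.length →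
      1 ≤ b → b ≤ n w.length → a ≠ b →
      interior (Jset (w ++ [a])) ∩ interior (Jset (w ++ [b])) = ∅
  diam_ratio : ∀ w, IsWord n w → ∀ a, 1 ≤ a → a ≤ n w.length →
      Metric.diam (Jset (w ++ [a])) = r w.length * Metric.diam (Jset w)

/-- Standing hypotheses on the Moran data; `R` plays the role of `r = inf_k r_k > 0`. -/
structure MoranData (d : ℕ) (J : Set (Pt d)) (n : ℕ → ℕ) (r : ℕ → ℝ) (R : ℝ) : Prop where
  dim_pos : 1 ≤ d
  compact : IsCompact J
  int_nonempty : (interior J).Nonempty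
  two_le : ∀ k, 2 ≤ n k
  r_pos : ∀ k, 0 < r k
  r_lt_one : ∀ k, r k < 1
  nr_le : ∀ k, (n k : ℝ) * r k ≤ 1
  R_pos : 0 < R
  R_inf : R = ⨅ k, r k

/-- The Moran set `E = ⋂_k ⋃_{w ∈ D_k} J_w`. -/
def MoranSet {d : ℕ} {J : Set (Pt d)} {n : ℕ → ℕ} {r : ℕ → ℝ}
    (M : MoranStructure d J n r) : Set (Pt d) :=
  ⋂ k, ⋃ w ∈ WordsLen n k, M.Jset w

/-- The product `r_1 ⋯ r_k`. -/
def prodR (r : ℕ → ℝ) (k : ℕ) : ℝ := ∏ j ∈ Finset.range k, r j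

/-- The level `X_m`:  `X_0 = {∅}`, and for `m ≥ 1`,
`X_m = {w : r_1⋯r_k ≤ R^m < r_1⋯r_{k-1}}` where `k` is the length of `w`. -/
def XLevel (n : ℕ → ℕ) (r : ℕ → ℝ) (R : ℝ) (m : ℕ) : Set (List ℕ) :=
  if m = 0 then {([] : List ℕ)}
  else {w | IsWord n w ∧ prodR r w.length ≤ R ^ m ∧ R ^ m < prodR r (w.length - 1)}

/-- The vertex set `X = ⋃_m X_m`. -/
def XV (n : ℕ → ℕ) (r : ℕ → ℝ) (R : ℝ) : Set (List ℕ) := ⋃ m, XLevel n r R m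

/-- `v` is the parent (first ancestor) of `u`:  `v` is the initial segment
of `u` lying one level above `u`. -/
def IsParent (n : ℕ → ℕ) (r : ℕ → ℝ) (R : ℝ) (v u : List ℕ) : Prop :=
  v ≠ u ∧ v <+: u ∧ ∃ m, 1 ≤ m ∧ u ∈ XLevel n r R m ∧ v ∈ XLevel n r R (m - 1)

/-- Vertical edge relation `𝔈_v` (as an unordered relation). -/
def Evert (n : ℕ → ℕ) (r : ℕ → ℝ) (R : ℝ) (u v : List ℕ) : Prop :=
  IsParent n r R u v ∨ IsParent n r R v u

variable {d : ℕ} {J : Set (Pt d)} {n : ℕ → ℕ} {r : ℕ → ℝ}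

/-- Horizontal edge relation `𝔈_h`: distinct words on a common level `X_m`, `m ≥ 1`,
whose Moran pieces intersect. -/
def Ehor (M : MoranStructure d J n r) (R : ℝ) (u v : List ℕ) : Prop :=
  u ≠ v ∧ ∃ m, 1 ≤ m ∧ u ∈ XLevel n r R m ∧ v ∈ XLevel n r R m ∧
    (M.Jset u ∩ M.Jset v).Nonempty

/-- The induced augmented tree `(X, 𝔈)`, `𝔈 = 𝔈_v ∪ 𝔈_h`, as a graph on all words
(words outside `X` are isolated vertices). -/
def AugGraph (M : MoranStructure d J n r) (R : ℝ) : SimpleGraph (List ℕ) where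
  Adj u v := Evert n r R u v ∨ Ehor M R u v
  symm := ⟨by
    rintro u v (h | ⟨hne, m, hm, hu, hv, hJ⟩)
    · exact Or.inl h.symm
    · exact Or.inr ⟨hne.symm, m, hm, hv, hu, by rwa [Set.inter_comm]⟩⟩
  loopless := ⟨by
    rintro u ((⟨h, -⟩ | ⟨h, -⟩) | ⟨h, -⟩) <;> exact h rfl⟩

/-- The tree `(X, 𝔈_v)` with only the vertical edges. -/
def TreeGraph (n : ℕ → ℕ) (r : ℕ → ℝ) (R : ℝ) : SimpleGraph (List ℕ) where
  Adj u v := Evert n r R u v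
  symm := ⟨fun _ _ h => h.symm⟩
  loopless := ⟨by rintro u (⟨h, -⟩ | ⟨h, -⟩) <;> exact h rfl⟩

/-- The graph `(X, 𝔈_h)` with only the horizontal edges. -/
def HorGraph (M : MoranStructure d J n r) (R : ℝ) : SimpleGraph (List ℕ) where
  Adj u v := Ehor M R u v
  symm := ⟨by
    rintro u v ⟨hne, m, hm, hu, hv, hJ⟩
    exact ⟨hne.symm, m, hm, hv, hu, by rwa [Set.inter_comm]⟩⟩
  loopless := ⟨by rintro u ⟨h, -⟩; exact h rfl⟩

/-- Gromov product `⟨x,y⟩ = (d(o,x) + d(o,y) - d(x,y))/2` with respect to a base point `o`. -/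
def gromovD {V : Type*} (G : SimpleGraph V) (o x y : V) : ℝ :=
  ((G.dist o x : ℝ) + (G.dist o y : ℝ) - (G.dist x y : ℝ)) / 2

/-- Condition (H): there is `C' > 0` such that on every level `X_m` (`m ≥ 1`),
two pieces either intersect or are at distance at least `C' R^m`. -/
def CondH (M : MoranStructure d J n r) (R : ℝ) : Prop :=
  ∃ C' : ℝ, 0 < C' ∧ ∀ m, 1 ≤ m → ∀ u ∈ XLevel n r R m, ∀ v ∈ XLevel n r R m,
    (M.Jset u ∩ M.Jset v).Nonempty ∨
    ∀ p ∈ M.Jset u, ∀ q ∈ M.Jset v, C' * R ^ m ≤ dist p q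

/-- `T` is a horizontal connected component: a maximal subset of some level `X_m`
which is connected in the horizontal graph. -/
def IsHCC (M : MoranStructure d J n r) (R : ℝ) (T : Set (List ℕ)) : Prop :=
  ∃ m, T ⊆ XLevel n r R m ∧ ((HorGraph M R).induce T).Connected ∧
    ∀ T', T ⊆ T' → T' ⊆ XLevel n r R m → ((HorGraph M R).induce T').Connected → T' = T

/-- The common suffix set `Σ_m` of the level `X_m`: words `w` with `uw ∈ X_{m+1}`
for (some, equivalently all) `u ∈ X_m`. -/
def SigmaSet (n : ℕ → ℕ) (r : ℕ → ℝ) (R : ℝ) (m : ℕ) : Set (List ℕ) :=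
  {w | ∃ u ∈ XLevel n r R m, u ++ w ∈ XLevel n r R (m + 1)}

/-- The offspring set `TΣ_m ⊆ X_{m+1}` of a set `T ⊆ X_m`. -/
def TSigma (n : ℕ → ℕ) (r : ℕ → ℝ) (R : ℝ) (m : ℕ) (T : Set (List ℕ)) : Set (List ℕ) :=
  {x | ∃ u ∈ T, ∃ w ∈ SigmaSet n r R m, x = u ++ w}

/-- The augmented tree is rearrangeable:  horizontal connected components have
uniformly bounded cardinality, and for every horizontal connected component `T ⊆ X_m`
with `#T = b`, the offspring set `TΣ_m` can be partitioned into `b` groups (indexed by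
the elements of `T`), each group being a union of horizontal connected components and
having exactly `#Σ_m` elements. -/
def Rearrangeable (M : MoranStructure d J n r) (R : ℝ) : Prop :=
  (∃ L : ℕ, ∀ T, IsHCC M R T → T.Finite ∧ T.ncard ≤ L) ∧
  ∀ m T, T ⊆ XLevel n r R m → IsHCC M R T →
    ∃ g : List ℕ → List ℕ,
      (∀ x ∈ TSigma n r R m T, g x ∈ T) ∧
      (∀ Z, IsHCC M R Z → Z ⊆ TSigma n r R m T → ∀ x ∈ Z, ∀ y ∈ Z, g x = g y) ∧
      (∀ i ∈ T, {x ∈ TSigma n r R m T | g x = i}.ncard = (SigmaSet n r R m).ncard)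

/-- `C` is a (topological) connected component of `A`. -/
def IsRelCC {α : Type*} [TopologicalSpace α] (C A : Set α) : Prop :=
  ∃ x ∈ A, C = connectedComponentIn A x

/-- Condition (v): there is `L` such that any `T ⊆ D_{k-1}` for which `⋃_{i∈T} J_i`
is a connected component of `⋃_{i∈D_{k-1}} J_i` satisfies `#T ≤ L`. -/
def CondV (M : MoranStructure d J n r) : Prop :=
  ∃ L : ℕ, ∀ k, 1 ≤ k → ∀ T ⊆ WordsLen n (k - 1),
    IsRelCC (⋃ i ∈ T, M.Jset i) (⋃ i ∈ WordsLen n (k - 1), M.Jset i) →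
    T.Finite ∧ T.ncard ≤ L

/-- Condition (vi): for any such `T` (with `#T = b`), the connected components of
`⋃_{i∈T} ⋃_{j=1}^{n_k} J_{ij}` can be partitioned into `b` groups (indexed by the
elements of `T`) so that the union of the components in each group is a union of
exactly `n_k` of the sets `J_{ij}`. -/
def CondVI (M : MoranStructure d J n r) : Prop :=
  ∀ k, 1 ≤ k → ∀ T ⊆ WordsLen n (k - 1),
    IsRelCC (⋃ i ∈ T, M.Jset i) (⋃ i ∈ WordsLen n (k - 1), M.Jset i) →
    ∃ f : Set (Pt d) → List ℕ,
      (∀ C, IsRelCC C (⋃ u ∈ T, ⋃ j ∈ Set.Icc 1 (n (k - 1)), M.Jset (u ++ [j])) → f C ∈ T) ∧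
      ∀ i ∈ T, ∃ W : Finset (List ℕ × ℕ),
        (∀ p ∈ W, p.1 ∈ T ∧ 1 ≤ p.2 ∧ p.2 ≤ n (k - 1)) ∧
        W.card = n (k - 1) ∧
        (⋃ C ∈ {C | IsRelCC C (⋃ u ∈ T, ⋃ j ∈ Set.Icc 1 (n (k - 1)), M.Jset (u ++ [j]))
            ∧ f C = i}, C)
          = ⋃ p ∈ W, M.Jset (p.1 ++ [p.2])

/-- A geodesic ray of the induced augmented tree: `u_m ∈ X_m` and `u_m = (u_{m+1})⁻¹`. -/
def IsRay (n : ℕ → ℕ) (r : ℕ → ℝ) (R : ℝ) (u : ℕ → List ℕ) : Prop :=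
  (∀ m, u m ∈ XLevel n r R m) ∧ ∀ m, IsParent n r R (u m) (u (m + 1))

/-- Geodesic rays as a type. -/
def MRay (n : ℕ → ℕ) (r : ℕ → ℝ) (R : ℝ) := {u : ℕ → List ℕ // IsRay n r R u}

/-- `t(ξ,η) = liminf_m ⟨u_m, v_m⟩`, valued in `EReal`. -/
def tLim {V : Type*} (G : SimpleGraph V) (o : V) (u v : ℕ → V) : EReal :=
  Filter.liminf (fun m => ((gromovD G o (u m) (v m) : ℝ) : EReal)) Filter.atTop

/-- `R ^ t` for `t ∈ EReal`, with the convention `R ^ ∞ = 0`. -/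
def rpowE (R : ℝ) (t : EReal) : ℝ := if t = ⊤ then 0 else R ^ t.toReal

/-- The hyperbolic boundary of the induced augmented tree: equivalence classes of
geodesic rays, two rays being equivalent when `t(ξ,η) = ∞`. -/
def MBoundary (M : MoranStructure d J n r) (R : ℝ) :=
  Quot (fun ξ η : MRay n r R => tLim (AugGraph M R) [] ξ.1 η.1 = ⊤)

/-- The class of a ray in the hyperbolic boundary. -/
def mkB (M : MoranStructure d J n r) (R : ℝ) (ξ : MRay n r R) : MBoundary M R :=
  Quot.mk _ ξ

/-- The metric `ρ_a` on the hyperbolic boundary: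
`ρ_a(ξ̄,η̄) = exp(-a · inf{t(ξ,η) : ξ ∈ ξ̄, η ∈ η̄})` for distinct classes, and `0` otherwise. -/
def mrho (M : MoranStructure d J n r) (R a : ℝ) (p q : MBoundary M R) : ℝ :=
  if p = q then 0
  else Real.exp (-a * (sInf {s : EReal | ∃ ξ η : MRay n r R,
    mkB M R ξ = p ∧ mkB M R η = q ∧ s = tLim (AugGraph M R) [] ξ.1 η.1}).toReal)

/-- An abstract augmented tree in the sense of Kaimanovich: a rooted tree (encoded
by a parent map and a level function) together with a symmetric horizontal edge
relation `Eh` joining distinct vertices of a common level whose parents are equal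
or horizontally joined. -/
structure AugmentedTree (V : Type*) where
  root : V
  parent : V → V
  lvl : V → ℕ
  lvl_root : lvl root = 0
  lvl_parent : ∀ x, x ≠ root → lvl (parent x) + 1 = lvl x
  Eh : V → V → Prop
  Eh_symm : ∀ x y, Eh x y → Eh y x
  Eh_ne : ∀ x y, Eh x y → x ≠ y
  Eh_lvl : ∀ x y, Eh x y → lvl x = lvl y
  Eh_parent : ∀ x y, Eh x y → parent x = parent y ∨ Eh (parent x) (parent y)

namespace AugmentedTree

variable {V : Type*} (T : AugmentedTree V)

/-- The vertical (tree) edge relation. -/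
def Ev (x y : V) : Prop :=
  (x ≠ T.root ∧ T.parent x = y) ∨ (y ≠ T.root ∧ T.parent y = x)

/-- The graph `(X, 𝔈)`, `𝔈 = 𝔈_v ∪ 𝔈_h`. -/
def graph : SimpleGraph V where
  Adj x y := x ≠ y ∧ (T.Ev x y ∨ T.Eh x y)
  symm := ⟨by
    rintro x y ⟨hne, h | h⟩
    · exact ⟨hne.symm, Or.inl h.symm⟩
    · exact ⟨hne.symm, Or.inr (T.Eh_symm x y h)⟩⟩
  loopless := ⟨fun _ h => h.1 rfl⟩

/-- Gromov product `⟨x,y⟩ = (|x| + |y| - d(x,y))/2` (one has `d(o,x) = |x| = lvl x`). -/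
def gromov (x y : V) : ℝ :=
  ((T.lvl x : ℝ) + (T.lvl y : ℝ) - (T.graph.dist x y : ℝ)) / 2

/-- Gromov hyperbolicity. -/
def Hyperbolic : Prop :=
  ∃ δ : ℝ, 0 ≤ δ ∧ ∀ x y z : V,
    min (T.gromov x z) (T.gromov z y) - δ ≤ T.gromov x y

/-- A geodesic ray from the root: `x_0 = o` and `x_m = (x_{m+1})⁻¹`. -/
def IsRayT (x : ℕ → V) : Prop := x 0 = T.root ∧ ∀ m, T.parent (x (m + 1)) = x m

/-- Geodesic rays from the root, as a type. -/
def Ray := {x : ℕ → V // T.IsRayT x}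

/-- `t(ξ,η) = liminf_m ⟨x_m, y_m⟩`, valued in `EReal`. -/
def tvalT (ξ η : T.Ray) : EReal :=
  Filter.liminf (fun m => ((T.gromov (ξ.1 m) (η.1 m) : ℝ) : EReal)) Filter.atTop

/-- The hyperbolic boundary: classes of geodesic rays, two rays being equivalent
when `t(ξ,η) = ∞`. -/
def Boundary := Quot (fun ξ η : T.Ray => T.tvalT ξ η = ⊤)

/-- The class of a ray in the boundary. -/
def mkBd (ξ : T.Ray) : T.Boundary := Quot.mk _ ξ

/-- The metric `ρ_a` on the hyperbolic boundary. -/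
def rho (a : ℝ) (p q : T.Boundary) : ℝ :=
  if p = q then 0
  else Real.exp (-a * (sInf {s : EReal | ∃ ξ η : T.Ray,
    T.mkBd ξ = p ∧ T.mkBd η = q ∧ s = T.tvalT ξ η}).toReal)

end AugmentedTree

end MoranPaper

end

noncomputable section
namespace MoranPaper

section Arith

lemma geom_sum_le' {q : ℝ} (h0 : 0 ≤ q) (h1 : q < 1) (N : ℕ) :
    ∑ i ∈ Finset.range N, q ^ i ≤ 1 / (1 - q) := by
  have h2 : (0:ℝ) < 1 - q := by linarith
  rw [geom_sum_eq h1.ne, ← neg_div_neg_eq, neg_sub, neg_sub]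
  have hN : (0:ℝ) ≤ q ^ N := pow_nonneg h0 N
  gcongr
  linarith

lemma geom_shift {ρ : ℝ} (h0 : 0 < ρ) (h1 : ρ < 1) (N : ℕ) {e s : ℤ} (he : s ≤ e) :
    ∑ k ∈ Finset.range N, ρ ^ (e + 2 * (k:ℤ)) ≤ ρ ^ s / (1 - ρ ^ 2) := by
  have hρ2 : ρ ^ 2 < 1 := pow_lt_one₀ h0.le h1 two_ne_zero
  have h2 : (0:ℝ) < 1 - ρ ^ 2 := by linarith
  have hterm : ∀ k : ℕ, ρ ^ (e + 2*(k:ℤ)) = ρ ^ e * ((ρ^2) ^ k) := by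
    intro k
    rw [show e + 2*(k:ℤ) = e + ((2*k : ℕ):ℤ) by push_cast; ring,
      zpow_add₀ h0.ne', zpow_natCast, pow_mul]
  rw [Finset.sum_congr rfl (fun k _ => hterm k), ← Finset.mul_sum]
  have hge : ρ ^ e ≤ ρ ^ s := zpow_le_zpow_right_of_le_one₀ h0 h1.le he
  have hpos : (0:ℝ) < ρ ^ e := zpow_pos h0 e
  calc ρ ^ e * ∑ k ∈ Finset.range N, (ρ^2) ^ k
      ≤ ρ ^ e * (1 / (1 - ρ^2)) := by
        gcongr
        exact geom_sum_le' (sq_nonneg ρ) hρ2 N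
    _ = ρ ^ e / (1 - ρ^2) := by ring
    _ ≤ ρ ^ s / (1 - ρ^2) := by gcongr

lemma sum_rho_bound {ρ : ℝ} (h0 : 0 < ρ) (h1 : ρ < 1) (l : ℕ) (pa pb : ℤ)
    (hc : pb - l ≤ pa) (p : ℕ → ℤ)
    (hA : ∀ i, i ≤ l → pa - i ≤ p i) (hB : ∀ i, i ≤ l → pb - ((l:ℤ) - i) ≤ p i) :
    ∑ i ∈ Finset.range (l + 1), ρ ^ (2 * p i) ≤ 2 / (1 - ρ ^ 2) * ρ ^ (pa + pb - l) := by
  classical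
  have hρ2 : ρ ^ 2 < 1 := pow_lt_one₀ h0.le h1 two_ne_zero
  have h2 : (0:ℝ) < 1 - ρ ^ 2 := by linarith
  set c : ℤ := pa - pb + l with hcdef
  have hc0 : 0 ≤ c := by simp only [hcdef]; linarith
  set i₀ : ℕ := (c / 2).toNat with hi₀def
  have hi₀ : (i₀ : ℤ) = c / 2 := Int.toNat_of_nonneg (Int.ediv_nonneg hc0 (by norm_num))
  have h2i₀ : 2 * (i₀:ℤ) ≤ c := by omega
  have h2i₀' : c ≤ 2 * (i₀:ℤ) + 1 := by omega
  rw [← Finset.sum_filter_add_sum_filter_not (Finset.range (l+1)) (fun i => i ≤ i₀)]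
  have hbound1 : ∑ i ∈ (Finset.range (l+1)).filter (fun i => i ≤ i₀), ρ ^ (2 * p i)
      ≤ ρ ^ (pa + pb - l) / (1 - ρ ^ 2) := by
    calc ∑ i ∈ (Finset.range (l+1)).filter (fun i => i ≤ i₀), ρ ^ (2 * p i)
        ≤ ∑ i ∈ (Finset.range (l+1)).filter (fun i => i ≤ i₀), ρ ^ (2 * (pa - (i:ℤ))) := by
          apply Finset.sum_le_sum
          intro i hi
          have hil : i ≤ l := by
            have := Finset.mem_range.mp (Finset.mem_filter.mp hi).1
            omega
          exact zpow_le_zpow_right_of_le_one₀ h0 h1.le (by have := hA i hil; linarith)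
      _ ≤ ∑ i ∈ Finset.range (i₀+1), ρ ^ (2 * (pa - (i:ℤ))) := by
          apply Finset.sum_le_sum_of_subset_of_nonneg
          · intro i hi
            have := Finset.mem_filter.mp hi
            exact Finset.mem_range.mpr (by omega)
          · intro i _ _
            exact (zpow_pos h0 _).le
      _ = ∑ j ∈ Finset.range (i₀+1), ρ ^ (2 * (pa - (i₀:ℤ) + (j:ℤ))) := by
          rw [← Finset.sum_range_reflect (fun j => ρ ^ (2 * (pa - (i₀:ℤ) + (j:ℤ)))) (i₀+1)]
          apply Finset.sum_congr rfl
          intro j hj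
          have hj' : j ≤ i₀ := by
            have := Finset.mem_range.mp hj; omega
          congr 1
          have : ((i₀ + 1 - 1 - j : ℕ) : ℤ) = (i₀:ℤ) - (j:ℤ) := by omega
          rw [this]; ring
      _ ≤ ρ ^ (pa + pb - l) / (1 - ρ ^ 2) := by
          have := geom_shift h0 h1 (i₀+1) (e := 2 * (pa - (i₀:ℤ)))
            (s := pa + pb - l) (by omega)
          calc ∑ j ∈ Finset.range (i₀+1), ρ ^ (2 * (pa - (i₀:ℤ) + (j:ℤ)))
              = ∑ j ∈ Finset.range (i₀+1), ρ ^ (2 * (pa - (i₀:ℤ)) + 2*(j:ℤ)) := by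
                apply Finset.sum_congr rfl; intro j _; congr 1; ring
            _ ≤ ρ ^ (pa + pb - l) / (1 - ρ ^ 2) := this
  have hbound2 : ∑ i ∈ (Finset.range (l+1)).filter (fun i => ¬ i ≤ i₀), ρ ^ (2 * p i)
      ≤ ρ ^ (pa + pb - l) / (1 - ρ ^ 2) := by
    calc ∑ i ∈ (Finset.range (l+1)).filter (fun i => ¬ i ≤ i₀), ρ ^ (2 * p i)
        ≤ ∑ i ∈ (Finset.range (l+1)).filter (fun i => ¬ i ≤ i₀), ρ ^ (2 * (pb - (l:ℤ) + (i:ℤ))) := by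
          apply Finset.sum_le_sum
          intro i hi
          have hil : i ≤ l := by
            have := (Finset.mem_filter.mp hi).1
            have := Finset.mem_range.mp this; omega
          refine zpow_le_zpow_right_of_le_one₀ h0 h1.le ?_
          have := hB i hil; linarith
      _ ≤ ∑ i ∈ Finset.Ico (i₀+1) (l+1), ρ ^ (2 * (pb - (l:ℤ) + (i:ℤ))) := by
          apply Finset.sum_le_sum_of_subset_of_nonneg
          · intro i hi
            have := Finset.mem_filter.mp hi
            have h1' := Finset.mem_range.mp this.1
            exact Finset.mem_Ico.mpr (by omega)
          · intro i _ _
            exact (zpow_pos h0 _).le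
      _ = ∑ k ∈ Finset.range (l + 1 - (i₀+1)), ρ ^ (2 * (pb - (l:ℤ) + ((i₀+1+k : ℕ):ℤ))) := by
          rw [Finset.sum_Ico_eq_sum_range]
      _ ≤ ρ ^ (pa + pb - l) / (1 - ρ ^ 2) := by
          have := geom_shift h0 h1 (l + 1 - (i₀+1)) (e := 2 * (pb - (l:ℤ) + (i₀:ℤ) + 1))
            (s := pa + pb - l) (by omega)
          calc ∑ k ∈ Finset.range (l + 1 - (i₀+1)), ρ ^ (2 * (pb - (l:ℤ) + ((i₀+1+k : ℕ):ℤ)))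
              = ∑ k ∈ Finset.range (l + 1 - (i₀+1)), ρ ^ (2 * (pb - (l:ℤ) + (i₀:ℤ) + 1) + 2*(k:ℤ)) := by
                apply Finset.sum_congr rfl; intro k _; congr 1; push_cast; ring
            _ ≤ ρ ^ (pa + pb - l) / (1 - ρ ^ 2) := this
  calc _ ≤ ρ ^ (pa + pb - l) / (1 - ρ ^ 2) + ρ ^ (pa + pb - l) / (1 - ρ ^ 2) :=
        add_le_add hbound1 hbound2
    _ = 2 / (1 - ρ ^ 2) * ρ ^ (pa + pb - l) := by ring

end Arith

section Words

variable {d : ℕ} {J : Set (Pt d)} {n : ℕ → ℕ} {r : ℕ → ℝ} {R : ℝ}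

lemma isWord_nil : IsWord n ([] : List ℕ) := by
  intro j h
  simp at h

lemma IsWord.prefix {w w' : List ℕ} (hw : IsWord n w) (h : w' <+: w) : IsWord n w' := by
  intro j hj
  have hj' : j < w.length := lt_of_lt_of_le hj h.length_le
  have := hw j hj'
  simpa [List.get_eq_getElem, h.getElem hj] using this

lemma isWord_concat {w : List ℕ} {a : ℕ} (hw : IsWord n (w ++ [a])) :
    1 ≤ a ∧ a ≤ n w.length := by
  have hlen : w.length < (w ++ [a]).length := by simp
  have := hw w.length hlen
  simpa [List.get_eq_getElem] using this

lemma prodR_pos (hD : MoranData d J n r R) (k : ℕ) : 0 < prodR r k :=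
  Finset.prod_pos fun i _ => hD.r_pos i

lemma prodR_succ (k : ℕ) : prodR r (k+1) = prodR r k * r k :=
  Finset.prod_range_succ _ _

lemma R_lt_one (hD : MoranData d J n r R) : R < 1 := by
  have hb : BddBelow (Set.range r) := ⟨0, fun x ⟨k, hk⟩ => hk ▸ (hD.r_pos k).le⟩
  have hle : R ≤ r 0 := hD.R_inf ▸ ciInf_le hb 0
  exact lt_of_le_of_lt hle (hD.r_lt_one 0)

lemma R_le_r (hD : MoranData d J n r R) (k : ℕ) : R ≤ r k := by
  have hb : BddBelow (Set.range r) := ⟨0, fun x ⟨k, hk⟩ => hk ▸ (hD.r_pos k).le⟩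
  exact hD.R_inf ▸ ciInf_le hb k

lemma J_nonempty (hD : MoranData d J n r R) : J.Nonempty := by
  obtain ⟨z, hz⟩ := hD.int_nonempty
  exact ⟨z, interior_subset hz⟩

lemma diam_J_pos (hD : MoranData d J n r R) : 0 < Metric.diam J := by
  obtain ⟨z, hz⟩ := hD.int_nonempty
  obtain ⟨ε, hε, hball⟩ := Metric.isOpen_iff.1 isOpen_interior z hz
  set e : Pt d := EuclideanSpace.single (⟨0, hD.dim_pos⟩ : Fin d) (1:ℝ) with he
  set w : Pt d := z + (ε/2) • e with hwdef
  have hne : ‖e‖ = 1 := by rw [he, EuclideanSpace.norm_single]; simp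
  have hdist : dist w z = ε / 2 := by
    rw [hwdef, dist_eq_norm, add_sub_cancel_left, norm_smul, hne]
    rw [Real.norm_eq_abs, abs_of_pos (by linarith : (0:ℝ) < ε/2)]; ring
  have hwJ : w ∈ J := by
    apply interior_subset
    apply hball
    rw [Metric.mem_ball, hdist]
    linarith
  have hzJ : z ∈ J := interior_subset hz
  have := Metric.dist_le_diam_of_mem hD.compact.isBounded hwJ hzJ
  linarith [hdist ▸ this]

variable (M : MoranStructure d J n r)

lemma Jset_compact (hD : MoranData d J n r R) {w : List ℕ} (hw : IsWord n w) :
    IsCompact (M.Jset w) := by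
  obtain ⟨S, c, hc, hdist, hJw⟩ := M.similar w hw
  have hlip : LipschitzWith c.toNNReal S := by
    apply LipschitzWith.of_dist_le_mul
    intro x y
    rw [hdist, Real.coe_toNNReal c hc.le]
  rw [hJw]
  exact hD.compact.image hlip.continuous

lemma Jset_nonempty (hD : MoranData d J n r R) {w : List ℕ} (hw : IsWord n w) :
    (M.Jset w).Nonempty := by
  obtain ⟨S, c, hc, hdist, hJw⟩ := M.similar w hw
  rw [hJw]
  exact (J_nonempty hD).image S

lemma Jset_diam (hD : MoranData d J n r R) :
    ∀ w : List ℕ, IsWord n w → Metric.diam (M.Jset w) = prodR r w.length * Metric.diam J := by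
  intro w
  induction w using List.reverseRecOn with
  | nil => intro _; simp [M.root_eq, prodR]
  | append_singleton t a ih =>
    intro hw
    have ht : IsWord n t := hw.prefix (List.prefix_append t [a])
    obtain ⟨h1, h2⟩ := isWord_concat hw
    rw [M.diam_ratio t ht a h1 h2, ih ht]
    simp only [List.length_append, List.length_singleton, prodR_succ]
    ring

lemma Jset_subset (hD : MoranData d J n r R) :
    ∀ w' : List ℕ, IsWord n w' → ∀ w, w <+: w' → M.Jset w' ⊆ M.Jset w := by
  intro w'
  induction w' using List.reverseRecOn with
  | nil =>
    intro _ w hw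
    rw [List.prefix_nil.mp hw]
  | append_singleton t a ih =>
    intro hw' w hpre
    rcases List.prefix_concat_iff.mp hpre with rfl | h
    · exact subset_rfl
    · have ht : IsWord n t := hw'.prefix (List.prefix_append t [a])
      obtain ⟨h1, h2⟩ := isWord_concat hw'
      exact (M.nested t ht a h1 h2).trans (ih ht w h)

end Words

section Levels

variable {d : ℕ} {J : Set (Pt d)} {n : ℕ → ℕ} {r : ℕ → ℝ} {R : ℝ}

lemma mem_xlevel_zero {w : List ℕ} : w ∈ XLevel n r R 0 ↔ w = [] := by
  simp [XLevel]

lemma nil_mem_xlevel_zero : ([] : List ℕ) ∈ XLevel n r R 0 := mem_xlevel_zero.mpr rfl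

lemma mem_xlevel_pos {w : List ℕ} {m : ℕ} (hm : m ≠ 0) :
    w ∈ XLevel n r R m ↔
      IsWord n w ∧ prodR r w.length ≤ R ^ m ∧ R ^ m < prodR r (w.length - 1) := by
  simp [XLevel, hm]

lemma mem_xlevel_isWord {w : List ℕ} {m : ℕ} (h : w ∈ XLevel n r R m) : IsWord n w := by
  rcases Nat.eq_zero_or_pos m with rfl | hm
  · rw [mem_xlevel_zero.mp h]; exact isWord_nil
  · exact ((mem_xlevel_pos hm.ne').mp h).1

lemma xlevel_len_pos (hD : MoranData d J n r R) {w : List ℕ} {m : ℕ} (hm : m ≠ 0)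
    (h : w ∈ XLevel n r R m) : 1 ≤ w.length := by
  by_contra hlen
  have h0 : w.length = 0 := by omega
  have hb := ((mem_xlevel_pos hm).mp h).2.1
  rw [h0] at hb
  have : prodR r 0 = 1 := by simp [prodR]
  rw [this] at hb
  have hRm : R ^ m < 1 := pow_lt_one₀ hD.R_pos.le (R_lt_one hD) hm
  linarith

lemma xlevel_not_lt (hD : MoranData d J n r R) {w : List ℕ} {m m' : ℕ} (hmm : m < m')
    (h : w ∈ XLevel n r R m) (h' : w ∈ XLevel n r R m') : False := by
  have hm'  : m' ≠ 0 := by omega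
  have hlen : 1 ≤ w.length := xlevel_len_pos hD hm' h'
  have hb' := ((mem_xlevel_pos hm').mp h').2.1
  rcases Nat.eq_zero_or_pos m with rfl | hm0
  · have : w = [] := mem_xlevel_zero.mp h
    rw [this] at hlen; simp at hlen
  · have hb := ((mem_xlevel_pos hm0.ne').mp h).2.2
    have hsplit : prodR r w.length = prodR r (w.length - 1) * r (w.length - 1) := by
      have hh : w.length - 1 + 1 = w.length := by omega
      conv_lhs => rw [← hh, prodR_succ]
    have hr : R ≤ r (w.length - 1) := R_le_r hD _
    have hgt : R ^ m * R < prodR r w.length := by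
      rw [hsplit]
      have h1 : 0 < R := hD.R_pos
      have h2 : 0 < prodR r (w.length - 1) := prodR_pos hD _
      nlinarith
    have hle : R ^ (m+1) ≤ R ^ m * R := by rw [pow_succ]
    have hm'le : R ^ m' ≤ R ^ (m+1) :=
      pow_le_pow_of_le_one hD.R_pos.le (R_lt_one hD).le (by omega)
    linarith

lemma xlevel_unique (hD : MoranData d J n r R) {w : List ℕ} {m m' : ℕ}
    (h : w ∈ XLevel n r R m) (h' : w ∈ XLevel n r R m') : m = m' := by
  rcases lt_trichotomy m m' with hlt | heq | hlt
  · exact (xlevel_not_lt hD hlt h h').elim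
  · exact heq
  · exact (xlevel_not_lt hD hlt h' h).elim

lemma xlevel_prodR_le {w : List ℕ} {m : ℕ} (h : w ∈ XLevel n r R m) :
    prodR r w.length ≤ R ^ m := by
  rcases Nat.eq_zero_or_pos m with rfl | hm
  · rw [mem_xlevel_zero.mp h]
    simp [prodR]
  · exact ((mem_xlevel_pos hm.ne').mp h).2.1

lemma Jset_diam_le (hD : MoranData d J n r R) (M : MoranStructure d J n r)
    {w : List ℕ} {m : ℕ} (h : w ∈ XLevel n r R m) :
    Metric.diam (M.Jset w) ≤ Metric.diam J * R ^ m := by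
  rw [Jset_diam M hD w (mem_xlevel_isWord h), mul_comm]
  exact mul_le_mul_of_nonneg_left (xlevel_prodR_le h) Metric.diam_nonneg

def InX (n : ℕ → ℕ) (r : ℕ → ℝ) (R : ℝ) (w : List ℕ) : Prop := ∃ m, w ∈ XLevel n r R m

def lev (n : ℕ → ℕ) (r : ℕ → ℝ) (R : ℝ) (w : List ℕ) : ℕ :=
  if h : InX n r R w then h.choose else 0

lemma lev_mem {w : List ℕ} (h : InX n r R w) : w ∈ XLevel n r R (lev n r R w) := by
  rw [lev, dif_pos h]
  exact h.choose_spec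

lemma lev_eq (hD : MoranData d J n r R) {w : List ℕ} {m : ℕ} (h : w ∈ XLevel n r R m) :
    lev n r R w = m := xlevel_unique hD (lev_mem ⟨m, h⟩) h

end Levels


section Graph

variable {d : ℕ} {J : Set (Pt d)} {n : ℕ → ℕ} {r : ℕ → ℝ} {R : ℝ}
variable {M : MoranStructure d J n r}

lemma adj_cases {a b : List ℕ} (h : (AugGraph M R).Adj a b) :
    Evert n r R a b ∨ Ehor M R a b := h

lemma adj_inX {a b : List ℕ} (h : (AugGraph M R).Adj a b) :
    InX n r R a ∧ InX n r R b := by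
  rcases adj_cases h with (hp | hp) | ⟨_, m, _, ha, hb, _⟩
  · obtain ⟨_, _, m, _, hb, ha⟩ := hp
    exact ⟨⟨m - 1, ha⟩, ⟨m, hb⟩⟩
  · obtain ⟨_, _, m, _, ha, hb⟩ := hp
    exact ⟨⟨m, ha⟩, ⟨m - 1, hb⟩⟩
  · exact ⟨⟨m, ha⟩, ⟨m, hb⟩⟩

lemma adj_levels (hD : MoranData d J n r R) {a b : List ℕ} {ma mb : ℕ}
    (h : (AugGraph M R).Adj a b) (ha : a ∈ XLevel n r R ma) (hb : b ∈ XLevel n r R mb) :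
    (ma:ℤ) ≤ mb + 1 ∧ (mb:ℤ) ≤ ma + 1 := by
  rcases adj_cases h with (hp | hp) | ⟨_, m, _, ha', hb', _⟩
  · obtain ⟨_, _, m, hm1, hb', ha'⟩ := hp
    have h1 : mb = m := xlevel_unique hD hb hb'
    have h2 : ma = m - 1 := xlevel_unique hD ha ha'
    omega
  · obtain ⟨_, _, m, hm1, ha', hb'⟩ := hp
    have h1 : ma = m := xlevel_unique hD ha ha'
    have h2 : mb = m - 1 := xlevel_unique hD hb hb'
    omega
  · have h1 : ma = m := xlevel_unique hD ha ha'
    have h2 : mb = m := xlevel_unique hD hb hb'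
    omega

lemma adj_inter (hD : MoranData d J n r R) {a b : List ℕ} (h : (AugGraph M R).Adj a b) :
    (M.Jset a ∩ M.Jset b).Nonempty := by
  rcases adj_cases h with (hp | hp) | ⟨_, m, _, _, _, hne⟩
  · obtain ⟨_, hpre, m, hm1, hb', ha'⟩ := hp
    have hwb : IsWord n b := mem_xlevel_isWord hb'
    obtain ⟨z, hz⟩ := Jset_nonempty M hD hwb
    exact ⟨z, Jset_subset M hD b hwb a hpre hz, hz⟩
  · obtain ⟨_, hpre, m, hm1, ha', hb'⟩ := hp
    have hwa : IsWord n a := mem_xlevel_isWord ha'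
    obtain ⟨z, hz⟩ := Jset_nonempty M hD hwa
    exact ⟨z, hz, Jset_subset M hD a hwa b hpre hz⟩
  · exact hne

lemma inX_getVert {a b : List ℕ} (W : (AugGraph M R).Walk a b) (ha : InX n r R a) :
    ∀ i, InX n r R (W.getVert i) := by
  intro i
  induction i with
  | zero => simpa [SimpleGraph.Walk.getVert_zero] using ha
  | succ i ih =>
    rcases lt_or_ge i W.length with hi | hi
    · exact (adj_inX (W.adj_getVert_succ hi)).2
    · rw [W.getVert_of_length_le (hi.trans (Nat.le_succ i))]
      rw [W.getVert_of_length_le hi] at ih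
      exact ih

lemma getVert_level_lb (hD : MoranData d J n r R) {a b : List ℕ} {ma : ℕ}
    (W : (AugGraph M R).Walk a b) (ha : a ∈ XLevel n r R ma) :
    ∀ i, i ≤ W.length → (ma:ℤ) - i ≤ (lev n r R (W.getVert i) : ℤ) := by
  intro i
  induction i with
  | zero =>
    intro _
    rw [SimpleGraph.Walk.getVert_zero, lev_eq hD ha]
    simp
  | succ i ih =>
    intro hi
    have hi' : i < W.length := Nat.lt_of_succ_le hi
    have hadj := W.adj_getVert_succ hi'
    have hX := adj_inX hadj
    have hlev := adj_levels hD hadj (lev_mem hX.1) (lev_mem hX.2)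
    have hih := ih hi'.le
    push_cast at hlev hih ⊢
    omega

lemma walk_level_le_length (hD : MoranData d J n r R) {a b : List ℕ} {ma mb : ℕ}
    (W : (AugGraph M R).Walk a b) (ha : a ∈ XLevel n r R ma) (hb : b ∈ XLevel n r R mb) :
    (mb:ℤ) - ma ≤ W.length := by
  have := getVert_level_lb hD W.reverse hb W.reverse.length le_rfl
  rw [SimpleGraph.Walk.getVert_length, SimpleGraph.Walk.length_reverse, lev_eq hD ha] at this
  omega

lemma chain_bound (hD : MoranData d J n r R) {a b : List ℕ}
    (W : (AugGraph M R).Walk a b) (ha : InX n r R a) :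
    ∀ i, i ≤ W.length → ∀ x' ∈ M.Jset a, ∀ z ∈ M.Jset (W.getVert i),
      dist x' z ≤ Metric.diam J * ∑ j ∈ Finset.range (i + 1), R ^ (lev n r R (W.getVert j)) := by
  intro i
  induction i with
  | zero =>
    intro _ x' hx' z hz
    rw [SimpleGraph.Walk.getVert_zero] at hz
    have hwa : IsWord n a := mem_xlevel_isWord (lev_mem ha)
    have h1 : dist x' z ≤ Metric.diam (M.Jset a) :=
      Metric.dist_le_diam_of_mem (Jset_compact M hD hwa).isBounded hx' hz
    have h2 : Metric.diam (M.Jset a) ≤ Metric.diam J * R ^ (lev n r R a) :=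
      Jset_diam_le hD M (lev_mem ha)
    calc dist x' z ≤ Metric.diam J * R ^ (lev n r R a) := h1.trans h2
      _ = Metric.diam J * ∑ j ∈ Finset.range (0+1), R ^ (lev n r R (W.getVert j)) := by
          rw [Finset.sum_range_one, SimpleGraph.Walk.getVert_zero]
  | succ i ih =>
    intro hi x' hx' z hz
    have hi' : i < W.length := Nat.lt_of_succ_le hi
    have hadj := W.adj_getVert_succ hi'
    obtain ⟨q, hq1, hq2⟩ := adj_inter hD hadj
    have hX := adj_inX hadj
    have h1 := ih hi'.le x' hx' q hq1
    have hword : IsWord n (W.getVert (i+1)) := mem_xlevel_isWord (lev_mem hX.2)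
    have h2 : dist q z ≤ Metric.diam (M.Jset (W.getVert (i+1))) :=
      Metric.dist_le_diam_of_mem (Jset_compact M hD hword).isBounded hq2 hz
    have h3 : Metric.diam (M.Jset (W.getVert (i+1)))
        ≤ Metric.diam J * R ^ (lev n r R (W.getVert (i+1))) := Jset_diam_le hD M (lev_mem hX.2)
    have htri := dist_triangle x' q z
    rw [Finset.sum_range_succ, mul_add]
    linarith

lemma walk_dist_bound (hD : MoranData d J n r R) {m : ℕ} {a b : List ℕ}
    (ha : a ∈ XLevel n r R m) (hb : b ∈ XLevel n r R m)
    (W : (AugGraph M R).Walk a b) {x y : Pt d} (hx : x ∈ M.Jset a) (hy : y ∈ M.Jset b) :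
    dist x y ≤ (2 * Metric.diam J / (1 - R)) *
      (R ^ ((1:ℝ)/2)) ^ (2*(m:ℤ) - (W.length : ℤ)) := by
  have hR0 : 0 < R := hD.R_pos
  have hR1 : R < 1 := R_lt_one hD
  set ρ : ℝ := R ^ ((1:ℝ)/2) with hρdef
  have hρ0 : 0 < ρ := Real.rpow_pos_of_pos hR0 _
  have hρ1 : ρ < 1 := Real.rpow_lt_one hR0.le hR1 (by norm_num)
  have hρ2R : ρ ^ 2 = R := by
    rw [hρdef, ← Real.rpow_natCast (R ^ ((1:ℝ)/2)) 2, ← Real.rpow_mul hR0.le]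
    norm_num
  set l := W.length with hldef
  have hterm : ∀ k : ℕ, R ^ k = ρ ^ (2 * (k:ℤ)) := by
    intro k
    rw [show (2 * (k:ℤ)) = ((2*k : ℕ) : ℤ) by push_cast; ring, zpow_natCast, pow_mul, hρ2R]
  -- chain bound
  have hchain := chain_bound hD W ⟨m, ha⟩ l le_rfl x hx y (by rwa [SimpleGraph.Walk.getVert_length])
  -- level bounds
  have hA : ∀ i, i ≤ l → (m:ℤ) - i ≤ ((lev n r R (W.getVert i)) : ℤ) :=
    getVert_level_lb hD W ha
  have hB : ∀ i, i ≤ l → (m:ℤ) - ((l:ℤ) - i) ≤ ((lev n r R (W.getVert i)) : ℤ) := by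
    intro i hi
    have hrev := getVert_level_lb hD W.reverse hb (l - i)
      (by rw [SimpleGraph.Walk.length_reverse]; omega)
    rw [SimpleGraph.Walk.getVert_reverse] at hrev
    have hll : W.length - (l - i) = i := by omega
    rw [hll] at hrev
    have hcast : ((l - i : ℕ) : ℤ) = (l:ℤ) - i := by omega
    omega
  have hsum := sum_rho_bound hρ0 hρ1 l m m (by push_cast; omega)
    (fun j => ((lev n r R (W.getVert j)) : ℤ)) hA hB
  have hsum' : ∑ j ∈ Finset.range (l+1), R ^ (lev n r R (W.getVert j))
      ≤ 2 / (1 - R) * ρ ^ (2*(m:ℤ) - l) := by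
    calc ∑ j ∈ Finset.range (l+1), R ^ (lev n r R (W.getVert j))
        = ∑ j ∈ Finset.range (l+1), ρ ^ (2 * ((lev n r R (W.getVert j)) : ℤ)) := by
          exact Finset.sum_congr rfl fun j _ => hterm _
      _ ≤ 2 / (1 - ρ ^ 2) * ρ ^ ((m:ℤ) + m - l) := hsum
      _ = 2 / (1 - R) * ρ ^ (2*(m:ℤ) - l) := by rw [hρ2R]; ring_nf
  have hDpos : 0 < Metric.diam J := diam_J_pos hD
  calc dist x y ≤ Metric.diam J * ∑ j ∈ Finset.range (l+1), R ^ (lev n r R (W.getVert j)) :=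
        hchain
    _ ≤ Metric.diam J * (2 / (1 - R) * ρ ^ (2*(m:ℤ) - l)) := by
        exact mul_le_mul_of_nonneg_left hsum' hDpos.le
    _ = (2 * Metric.diam J / (1 - R)) * ρ ^ (2*(m:ℤ) - (l:ℤ)) := by ring

end Graph


section Rays

variable {d : ℕ} {J : Set (Pt d)} {n : ℕ → ℕ} {r : ℕ → ℝ} {R : ℝ}
variable {M : MoranStructure d J n r}

lemma ray_root {u : ℕ → List ℕ} (hu : IsRay n r R u) : u 0 = [] :=
  mem_xlevel_zero.mp (hu.1 0)

lemma ray_adj {u : ℕ → List ℕ} (hu : IsRay n r R u) (m : ℕ) :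
    (AugGraph M R).Adj (u (m+1)) (u m) :=
  Or.inl (Or.inr (hu.2 m))

lemma ray_walk (M : MoranStructure d J n r) {u : ℕ → List ℕ} (hu : IsRay n r R u)
    (k m : ℕ) (hkm : k ≤ m) :
    ∃ W : (AugGraph M R).Walk (u m) (u k), W.length = m - k := by
  induction m, hkm using Nat.le_induction with
  | base => exact ⟨SimpleGraph.Walk.nil, by simp⟩
  | succ m hkm ih =>
    obtain ⟨W, hW⟩ := ih
    refine ⟨SimpleGraph.Walk.cons (ray_adj hu m) W, ?_⟩
    rw [SimpleGraph.Walk.length_cons, hW]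
    omega

lemma dist_root (hD : MoranData d J n r R) {u : ℕ → List ℕ} (hu : IsRay n r R u) (m : ℕ) :
    (AugGraph M R).dist [] (u m) = m := by
  obtain ⟨W, hW⟩ := ray_walk M hu 0 m (Nat.zero_le m)
  let W' : (AugGraph M R).Walk (u m) [] := W.copy rfl (ray_root hu)
  have hlen : W'.length = m := by
    simp only [W', SimpleGraph.Walk.length_copy, hW]
    omega
  have hle : (AugGraph M R).dist [] (u m) ≤ m := by
    have := SimpleGraph.dist_le W'.reverse
    rwa [SimpleGraph.Walk.length_reverse, hlen] at this
  have hreach : (AugGraph M R).Reachable [] (u m) := ⟨W'.reverse⟩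
  obtain ⟨P, hP⟩ := hreach.exists_walk_length_eq_dist
  have hge := walk_level_le_length hD P nil_mem_xlevel_zero (hu.1 m)
  rw [hP] at hge
  omega

lemma ray_reachable {u v : ℕ → List ℕ} (hu : IsRay n r R u) (hv : IsRay n r R v)
    (m k : ℕ) : (AugGraph M R).Reachable (u m) (v k) := by
  obtain ⟨Wu, _⟩ := ray_walk M hu 0 m (Nat.zero_le m)
  obtain ⟨Wv, _⟩ := ray_walk M hv 0 k (Nat.zero_le k)
  exact ⟨(Wu.copy rfl (ray_root hu)).append (Wv.copy rfl (ray_root hv)).reverse⟩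

lemma dist_A (hD : MoranData d J n r R) {u v : ℕ → List ℕ}
    (hu : IsRay n r R u) (hv : IsRay n r R v) {k m : ℕ} (hkm : k ≤ m)
    (hlink : u k = v k ∨ (1 ≤ k ∧ (M.Jset (u k) ∩ M.Jset (v k)).Nonempty)) :
    ((AugGraph M R).dist (u m) (v m) : ℤ) ≤ 2 * ((m:ℤ) - k) + 1 := by
  obtain ⟨Wu, hWu⟩ := ray_walk M hu k m hkm
  obtain ⟨Wv, hWv⟩ := ray_walk M hv k m hkm
  by_cases heq : u k = v k
  · have hdle := SimpleGraph.dist_le (Wu.append ((Wv.reverse).copy heq.symm rfl))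
    rw [SimpleGraph.Walk.length_append, SimpleGraph.Walk.length_copy,
      SimpleGraph.Walk.length_reverse, hWu, hWv] at hdle
    push_cast
    omega
  · rcases hlink with heq' | ⟨hk1, hne⟩
    · exact absurd heq' heq
    · have hadj : (AugGraph M R).Adj (u k) (v k) :=
        Or.inr ⟨heq, k, hk1, hu.1 k, hv.1 k, hne⟩
      have hdle := SimpleGraph.dist_le (Wu.append (SimpleGraph.Walk.cons hadj Wv.reverse))
      rw [SimpleGraph.Walk.length_append, SimpleGraph.Walk.length_cons,
        SimpleGraph.Walk.length_reverse, hWu, hWv] at hdle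
      push_cast
      omega

end Rays


end MoranPaper
end


open MoranPaper

/-- under condition (H) there is `C > 0` with
`C⁻¹·|Φ(ξ) - Φ(η)| ≤ r^{t(ξ,η)} ≤ C·|Φ(ξ) - Φ(η)|` whenever `Φ(ξ) ≠ Φ(η)`. -/
theorem MoranPaper.statement9 (d : ℕ) (J : Set (MoranPaper.Pt d)) (n : ℕ → ℕ) (r : ℕ → ℝ)
    (R : ℝ) (hD : MoranPaper.MoranData d J n r R) (M : MoranPaper.MoranStructure d J n r)
    (hH : MoranPaper.CondH M R) :
    ∃ C : ℝ, 0 < C ∧ ∀ u v : ℕ → List ℕ,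
      MoranPaper.IsRay n r R u → MoranPaper.IsRay n r R v →
      ∀ x y : MoranPaper.Pt d,
        (⋂ m, M.Jset (u m)) = {x} → (⋂ m, M.Jset (v m)) = {y} → x ≠ y →
        C⁻¹ * dist x y
            ≤ MoranPaper.rpowE R (MoranPaper.tLim (MoranPaper.AugGraph M R) [] u v) ∧
        MoranPaper.rpowE R (MoranPaper.tLim (MoranPaper.AugGraph M R) [] u v)
            ≤ C * dist x y := by
  classical
  obtain ⟨C', hC'pos, hHH⟩ := hH
  have hR0 : 0 < R := hD.R_pos
  have hR1 : R < 1 := R_lt_one hD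
  have hD0 : 0 < Metric.diam J := diam_J_pos hD
  have h1R : (0:ℝ) < 1 - R := by linarith
  have hK₁ : (0:ℝ) < 2 * Metric.diam J / (1 - R) := by positivity
  have hR32 : (0:ℝ) < R ^ ((3:ℝ)/2) := Real.rpow_pos_of_pos hR0 _
  refine ⟨max (2 * Metric.diam J / (1 - R)) (1 / (C' * R ^ ((3:ℝ)/2))),
    lt_of_lt_of_le hK₁ (le_max_left _ _), ?_⟩
  set C : ℝ := max (2 * Metric.diam J / (1 - R)) (1 / (C' * R ^ ((3:ℝ)/2))) with hCdef
  have hC : 0 < C := lt_of_lt_of_le hK₁ (le_max_left _ _)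
  intro u v hu hv x y hxint hyint hxy
  have hx : ∀ m, x ∈ M.Jset (u m) := by
    intro m
    have hmem : x ∈ ⋂ m, M.Jset (u m) := by rw [hxint]; exact Set.mem_singleton x
    exact Set.mem_iInter.mp hmem m
  have hy : ∀ m, y ∈ M.Jset (v m) := by
    intro m
    have hmem : y ∈ ⋂ m, M.Jset (v m) := by rw [hyint]; exact Set.mem_singleton y
    exact Set.mem_iInter.mp hmem m
  have hdxy : 0 < dist x y := dist_pos.mpr hxy
  -- Gromov product formula
  have hgrom : ∀ m, gromovD (AugGraph M R) [] (u m) (v m)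
      = (((2*(m:ℤ) - ((AugGraph M R).dist (u m) (v m) : ℤ)) : ℤ) : ℝ) / 2 := by
    intro m
    simp only [gromovD]
    rw [dist_root hD hu m, dist_root hD hv m]
    push_cast
    ring
  -- per-m upper bound on dist x y
  have key1 : ∀ m, dist x y
      ≤ (2 * Metric.diam J / (1 - R)) * R ^ (gromovD (AugGraph M R) [] (u m) (v m)) := by
    intro m
    obtain ⟨P, hP⟩ := (ray_reachable (M := M) hu hv m m).exists_walk_length_eq_dist
    have hb := walk_dist_bound hD (hu.1 m) (hv.1 m) P (hx m) (hy m)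
    rw [hP] at hb
    have hconv : (R ^ ((1:ℝ)/2)) ^ (2*(m:ℤ) - ((AugGraph M R).dist (u m) (v m) : ℤ))
        = R ^ (gromovD (AugGraph M R) [] (u m) (v m)) := by
      rw [hgrom m,
        show ((((2*(m:ℤ) - ((AugGraph M R).dist (u m) (v m) : ℤ)) : ℤ) : ℝ)) / 2
          = (1/2) * (((2*(m:ℤ) - ((AugGraph M R).dist (u m) (v m) : ℤ)) : ℤ) : ℝ) by ring,
        Real.rpow_mul hR0.le, Real.rpow_intCast]
    rw [hconv] at hb
    exact hb
  -- existence of a separation level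
  have hsep : ∃ s, M.Jset (u s) ∩ M.Jset (v s) = ∅ := by
    obtain ⟨s, hs⟩ := exists_pow_lt_of_lt_one
      (show (0:ℝ) < dist x y / (2 * Metric.diam J + 1) by positivity) hR1
    refine ⟨s, ?_⟩
    by_contra hne
    obtain ⟨q, hq1, hq2⟩ := Set.nonempty_iff_ne_empty.mpr hne
    have d1 : dist x q ≤ Metric.diam J * R ^ s :=
      le_trans (Metric.dist_le_diam_of_mem
        (Jset_compact M hD (mem_xlevel_isWord (hu.1 s))).isBounded (hx s) hq1)
        (Jset_diam_le hD M (hu.1 s))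
    have d2 : dist q y ≤ Metric.diam J * R ^ s :=
      le_trans (Metric.dist_le_diam_of_mem
        (Jset_compact M hD (mem_xlevel_isWord (hv.1 s))).isBounded hq2 (hy s))
        (Jset_diam_le hD M (hv.1 s))
    have htri := dist_triangle x q y
    have hRs : R ^ s < dist x y / (2 * Metric.diam J + 1) := hs
    have hRspos : (0:ℝ) < R ^ s := pow_pos hR0 s
    rw [lt_div_iff₀ (by positivity)] at hRs
    nlinarith
  set s₀ := Nat.find hsep with hs₀def
  have hs₀ : M.Jset (u s₀) ∩ M.Jset (v s₀) = ∅ := Nat.find_spec hsep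
  have hs₀pos : 1 ≤ s₀ := by
    by_contra h
    have h0 : s₀ = 0 := by omega
    have h2 : u 0 = v 0 := by rw [ray_root hu, ray_root hv]
    have hmem : x ∈ M.Jset (u s₀) ∩ M.Jset (v s₀) := by
      rw [h0, ← h2]; exact ⟨hx 0, hx 0⟩
    rw [hs₀] at hmem
    simpa using hmem
  -- (H) at level s₀
  have key2 : C' * R ^ s₀ ≤ dist x y := by
    rcases hHH s₀ hs₀pos (u s₀) (hu.1 s₀) (v s₀) (hv.1 s₀) with hne | hfar
    · rw [hs₀] at hne
      simpa using hne
    · exact hfar x (hx s₀) y (hy s₀)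
  -- upper bound β for the Gromov products
  have hε : (0:ℝ) < dist x y / (2 * Metric.diam J / (1 - R)) := by positivity
  have hlogR : Real.log R < 0 := Real.log_neg hR0 hR1
  have hβm : ∀ m, gromovD (AugGraph M R) [] (u m) (v m)
      ≤ Real.log (dist x y / (2 * Metric.diam J / (1 - R))) / Real.log R := by
    intro m
    have h1 : dist x y / (2 * Metric.diam J / (1 - R))
        ≤ R ^ (gromovD (AugGraph M R) [] (u m) (v m)) :=
      (div_le_iff₀' hK₁).mpr (key1 m)
    have h2 := Real.log_le_log hε h1
    rw [Real.log_rpow hR0] at h2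
    rw [le_div_iff_of_neg hlogR]
    linarith
  -- eventual lower bound for the Gromov products
  have hA : ∀ m, s₀ ≤ m →
      (s₀:ℝ) - 3/2 ≤ gromovD (AugGraph M R) [] (u m) (v m) := by
    intro m hm
    have hlink : u (s₀ - 1) = v (s₀ - 1) ∨
        (1 ≤ s₀ - 1 ∧ (M.Jset (u (s₀-1)) ∩ M.Jset (v (s₀-1))).Nonempty) := by
      rcases Nat.eq_zero_or_pos (s₀ - 1) with h0 | h1
      · left; rw [h0, ray_root hu, ray_root hv]
      · by_cases heq : u (s₀-1) = v (s₀-1)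
        · left; exact heq
        · right
          refine ⟨h1, ?_⟩
          have := Nat.find_min hsep (show s₀ - 1 < s₀ by omega)
          exact Set.nonempty_iff_ne_empty.mpr this
    have hd := dist_A hD hu hv (show s₀ - 1 ≤ m by omega) hlink
    rw [hgrom m]
    have hcast : ((s₀ - 1 : ℕ) : ℤ) = (s₀:ℤ) - 1 := by omega
    rw [hcast] at hd
    have hd' : (((AugGraph M R).dist (u m) (v m) : ℕ) : ℝ)
        ≤ 2 * ((m:ℝ) - ((s₀:ℝ) - 1)) + 1 := by exact_mod_cast hd
    push_cast
    linarith
  -- liminf bounds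
  have ht_ub : tLim (AugGraph M R) [] u v
      ≤ ((Real.log (dist x y / (2 * Metric.diam J / (1 - R))) / Real.log R : ℝ) : EReal) := by
    simp only [tLim]
    calc Filter.liminf (fun m => ((gromovD (AugGraph M R) [] (u m) (v m) : ℝ) : EReal)) Filter.atTop
        ≤ Filter.liminf (fun _ =>
            ((Real.log (dist x y / (2 * Metric.diam J / (1 - R))) / Real.log R : ℝ) : EReal))
            Filter.atTop := by
          exact Filter.liminf_le_liminf
            (Filter.Eventually.of_forall fun m => EReal.coe_le_coe_iff.mpr (hβm m))
            (by isBoundedDefault) (by isBoundedDefault)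
      _ = _ := Filter.liminf_const _
  have ht_lb : (((s₀:ℝ) - 3/2 : ℝ) : EReal) ≤ tLim (AugGraph M R) [] u v := by
    simp only [tLim]
    calc (((s₀:ℝ) - 3/2 : ℝ) : EReal)
        = Filter.liminf (fun _ : ℕ => (((s₀:ℝ) - 3/2 : ℝ) : EReal)) Filter.atTop :=
          (Filter.liminf_const _).symm
      _ ≤ Filter.liminf (fun m => ((gromovD (AugGraph M R) [] (u m) (v m) : ℝ) : EReal))
            Filter.atTop := by
          refine Filter.liminf_le_liminf ?_ (by isBoundedDefault) (by isBoundedDefault)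
          filter_upwards [Filter.eventually_ge_atTop s₀] with m hm
          exact EReal.coe_le_coe_iff.mpr (hA m hm)
  have htop : tLim (AugGraph M R) [] u v ≠ ⊤ := ne_top_of_le_ne_top (EReal.coe_ne_top _) ht_ub
  have hbot : tLim (AugGraph M R) [] u v ≠ ⊥ := by
    intro h
    rw [h] at ht_lb
    exact (EReal.coe_ne_bot _) (le_bot_iff.mp ht_lb)
  have hτub : (tLim (AugGraph M R) [] u v).toReal
      ≤ Real.log (dist x y / (2 * Metric.diam J / (1 - R))) / Real.log R := by
    have := EReal.toReal_le_toReal ht_ub hbot (EReal.coe_ne_top _)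
    rwa [EReal.toReal_coe] at this
  have hτlb : (s₀:ℝ) - 3/2 ≤ (tLim (AugGraph M R) [] u v).toReal := by
    have := EReal.toReal_le_toReal ht_lb (EReal.coe_ne_bot _) htop
    rwa [EReal.toReal_coe] at this
  have hrpow : rpowE R (tLim (AugGraph M R) [] u v)
      = R ^ (tLim (AugGraph M R) [] u v).toReal := by
    rw [rpowE, if_neg htop]
  rw [hrpow]
  constructor
  · -- lower bound
    have h1 : R ^ (Real.log (dist x y / (2 * Metric.diam J / (1 - R))) / Real.log R)
        ≤ R ^ (tLim (AugGraph M R) [] u v).toReal :=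
      Real.rpow_le_rpow_of_exponent_ge hR0 hR1.le hτub
    have h2 : R ^ (Real.log (dist x y / (2 * Metric.diam J / (1 - R))) / Real.log R)
        = dist x y / (2 * Metric.diam J / (1 - R)) := by
      rw [Real.rpow_def_of_pos hR0, mul_comm, div_mul_cancel₀ _ (ne_of_lt hlogR)]
      exact Real.exp_log hε
    have h3 : C⁻¹ * dist x y ≤ dist x y / (2 * Metric.diam J / (1 - R)) := by
      have hCK : 2 * Metric.diam J / (1 - R) ≤ C := le_max_left _ _
      have hinv : C⁻¹ ≤ (2 * Metric.diam J / (1 - R))⁻¹ := by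
        apply inv_anti₀ hK₁ hCK
      calc C⁻¹ * dist x y ≤ (2 * Metric.diam J / (1 - R))⁻¹ * dist x y :=
            mul_le_mul_of_nonneg_right hinv dist_nonneg
        _ = dist x y / (2 * Metric.diam J / (1 - R)) := by ring
    calc C⁻¹ * dist x y ≤ dist x y / (2 * Metric.diam J / (1 - R)) := h3
      _ = R ^ (Real.log (dist x y / (2 * Metric.diam J / (1 - R))) / Real.log R) := h2.symm
      _ ≤ R ^ (tLim (AugGraph M R) [] u v).toReal := h1
  · -- upper bound
    have h1 : R ^ (tLim (AugGraph M R) [] u v).toReal ≤ R ^ ((s₀:ℝ) - 3/2) :=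
      Real.rpow_le_rpow_of_exponent_ge hR0 hR1.le hτlb
    have h2 : R ^ ((s₀:ℝ) - 3/2) = R ^ (s₀:ℕ) / R ^ ((3:ℝ)/2) := by
      rw [show ((s₀:ℝ) - 3/2) = (s₀:ℝ) - (3:ℝ)/2 by norm_num, Real.rpow_sub hR0,
        Real.rpow_natCast]
    have h3 : R ^ (s₀:ℕ) ≤ dist x y / C' := (le_div_iff₀' hC'pos).mpr key2
    have h4 : R ^ ((s₀:ℝ) - 3/2) ≤ (1 / (C' * R ^ ((3:ℝ)/2))) * dist x y := by
      rw [h2]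
      calc R ^ (s₀:ℕ) / R ^ ((3:ℝ)/2) ≤ (dist x y / C') / R ^ ((3:ℝ)/2) := by gcongr
        _ = (1 / (C' * R ^ ((3:ℝ)/2))) * dist x y := by
            field_simp
    have h5 : (1 / (C' * R ^ ((3:ℝ)/2))) ≤ C := le_max_right _ _
    calc R ^ (tLim (AugGraph M R) [] u v).toReal ≤ R ^ ((s₀:ℝ) - 3/2) := h1
      _ ≤ (1 / (C' * R ^ ((3:ℝ)/2))) * dist x y := h4
      _ ≤ C * dist x y := mul_le_mul_of_nonneg_right h5 dist_nonneg
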